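/- If a graph G has an orthogonal representation by nonzero vectors in ℝ^c with c ≤ 4, then G has a rank-1 quantum 4-colouring (χ_q^(1)(G) ≤ 4). -/

import Mathlib

/-- Rows of the quaternion left-multiplication matrix of `a`. -/
private def quatRow (a : Fin 4 → ℝ) : Fin 4 → Fin 4 → ℝ :=
  ![![a 0, -a 1, -a 2, -a 3],
    ![a 1,  a 0, -a 3,  a 2],
    ![a 2,  a 3,  a 0, -a 1],
    ![a 3, -a 2,  a 1,  a 0]]

private lemma quatRow_diag (a b : Fin 4 → ℝ) (α : Fin 4) :
    ∑ i : Fin 4, quatRow a α i * quatRow b α i = ∑ i : Fin 4, a i * b i := by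
  fin_cases α <;> simp [quatRow, Fin.sum_univ_four] <;> ring

private lemma quatRow_off (a : Fin 4 → ℝ) (α β : Fin 4) (h : α ≠ β) :
    ∑ i : Fin 4, quatRow a α i * quatRow a β i = 0 := by
  fin_cases α <;> fin_cases β <;> simp_all [quatRow, Fin.sum_univ_four] <;> ring

private lemma pad_sum {c : ℕ} (hc : c ≤ 4) (f : Fin c → ℝ) :
    (∑ i : Fin 4, if h : (i : ℕ) < c then f ⟨i, h⟩ else 0) = ∑ j : Fin c, f j := by
  set g : ℕ → ℝ := fun i => if h : i < c then f ⟨i, h⟩ else 0 with hg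
  calc (∑ i : Fin 4, g i) = ∑ i ∈ Finset.range 4, g i := Fin.sum_univ_eq_sum_range g 4
    _ = ∑ i ∈ Finset.range c, g i := by
        refine (Finset.sum_subset (Finset.range_subset_range.2 hc) ?_).symm
        intro i _ hi
        simp [hg, Finset.mem_range.not.1 hi]
    _ = ∑ j : Fin c, g j := (Fin.sum_univ_eq_sum_range g c).symm
    _ = ∑ j : Fin c, f j := by
        refine Finset.sum_congr rfl fun j _ => ?_
        simp [hg, j.2]

theorem stmt19 {V : Type*} (G : SimpleGraph V) (c : ℕ) (hc : c ≤ 4)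
    (φ : V → EuclideanSpace ℝ (Fin c)) (hnz : ∀ v, φ v ≠ 0)
    (horth : ∀ v w, G.Adj v w → (inner ℝ (φ v) (φ w) : ℝ) = 0) :
    ∃ e : V → Fin 4 → EuclideanSpace ℂ (Fin 4),
      (∀ v, Orthonormal ℂ (e v)) ∧
      ∀ v w, G.Adj v w → ∀ α, (inner ℂ (e v α) (e w α) : ℂ) = 0 := by
  set x : V → Fin 4 → ℝ := fun v i =>
    if h : (i : ℕ) < c then φ v ⟨i, h⟩ / ‖φ v‖ else 0 with hx
  have hdot : ∀ v w, ∑ i : Fin 4, x v i * x w i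
      = (inner ℝ (φ v) (φ w) : ℝ) / (‖φ v‖ * ‖φ w‖) := by
    intro v w
    have h1 : ∀ i : Fin 4, x v i * x w i =
        if h : (i : ℕ) < c then (φ v ⟨i, h⟩ * φ w ⟨i, h⟩) / (‖φ v‖ * ‖φ w‖) else 0 := by
      intro i
      by_cases h : (i : ℕ) < c
      · simp only [hx, dif_pos h]; ring
      · simp [hx, dif_neg h]
    rw [Finset.sum_congr rfl fun i _ => h1 i,
      pad_sum hc (fun j => (φ v j * φ w j) / (‖φ v‖ * ‖φ w‖)), ← Finset.sum_div,
      PiLp.inner_apply]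
    simp [RCLike.inner_apply, mul_comm]
  have hunit : ∀ v, ∑ i : Fin 4, x v i * x v i = 1 := by
    intro v
    rw [hdot, real_inner_self_eq_norm_sq]
    have h0 : ‖φ v‖ ≠ 0 := norm_ne_zero_iff.2 (hnz v)
    field_simp
  have horth' : ∀ v w, G.Adj v w → ∑ i : Fin 4, x v i * x w i = 0 := by
    intro v w hvw; rw [hdot, horth v w hvw, zero_div]
  refine ⟨fun v α => WithLp.toLp 2 fun β => ((quatRow (x v) α β : ℝ) : ℂ), fun v => ?_, fun v w hvw α => ?_⟩
  · rw [orthonormal_iff_ite]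
    intro α β
    rw [PiLp.inner_apply]
    simp only [RCLike.inner_apply, WithLp.ofLp_toLp, Complex.conj_ofReal, ← Complex.ofReal_mul,
      ← Complex.ofReal_sum]
    by_cases h : α = β
    · subst h
      rw [quatRow_diag, hunit v]
      simp
    · rw [quatRow_off (x v) β α (Ne.symm h)]
      simp [h]
  · rw [PiLp.inner_apply]
    simp only [RCLike.inner_apply, WithLp.ofLp_toLp, Complex.conj_ofReal, ← Complex.ofReal_mul,
      ← Complex.ofReal_sum]
    rw [quatRow_diag, horth' w v hvw.symm]
    simp
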